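/- For every problem f :⊆ ℕ^ℕ ⇉ ℕ^ℕ and each player P ∈ {I, II}: Player P has a winning strategy in the Wadge game of f if and only if Player P has a winning strategy in the Lipschitz game of f^w. -/
import Mathlib


noncomputable section

/-- Baire space `ℕ^ℕ`. -/
abbrev Baire : Type := ℕ → ℕ

/-- The Cantor pairing `⟨n,k⟩ = (n+k)(n+k+1)/2 + k`. -/
def cpair (n k : ℕ) : ℕ := (n + k) * (n + k + 1) / 2 + k

/-- The inverse of the Cantor pairing. -/
noncomputable def cunpair (m : ℕ) : ℕ × ℕ :=
  Classical.epsilon fun x : ℕ × ℕ => cpair x.1 x.2 = m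

/-- A fixed bijective numbering `w : ℕ → List ℕ` of finite words. -/
def word (n : ℕ) : List ℕ := Denumerable.ofNat (List ℕ) n

/-- `l` is a finite prefix of the infinite sequence `p`. -/
def IsPrefixOf (l : List ℕ) (p : Baire) : Prop := l = (List.range l.length).map p

/-- Two words are comparable in the prefix order. -/
def WordComparable (u v : List ℕ) : Prop := u <+: v ∨ v <+: u

/-- The word `w(n_i)` decoded from the `i`-th entry of the code `q`. -/
noncomputable def wn (q : Baire) (i : ℕ) : List ℕ := word (cunpair (q i)).1

/-- The word `w(k_i)` decoded from the `i`-th entry of the code `q`. -/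
noncomputable def wk (q : Baire) (i : ℕ) : List ℕ := word (cunpair (q i)).2

/-- The code `q` is consistent. -/
def ConsistentCode (q : Baire) : Prop :=
  ∀ i j, WordComparable (wn q i) (wn q j) → WordComparable (wk q i) (wk q j)

/-- The continuous partial function `Φ_q :⊆ ℕ^ℕ → ℕ^ℕ` coded by `q`. -/
noncomputable def Phi (q : Baire) : Baire →. Baire := fun p =>
  ⟨ConsistentCode q ∧ ∀ m : ℕ, ∃ i, IsPrefixOf (wn q i) p ∧ m < (wk q i).length,
   fun _ => Classical.epsilon fun x : Baire =>
      ∀ i, IsPrefixOf (wn q i) p → IsPrefixOf (wk q i) x⟩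

/-- The pairing `⟨q,p⟩` on Baire space. -/
def bpair (q p : Baire) : Baire := fun n => if n % 2 = 0 then q (n / 2) else p (n / 2)

/-- Even part of a sequence. -/
def evens (r : Baire) : Baire := fun n => r (2 * n)

/-- Odd part of a sequence. -/
def odds (r : Baire) : Baire := fun n => r (2 * n + 1)

/-- The universal function `U(⟨q,p⟩) = Φ_q(p)`. -/
noncomputable def U : Baire →. Baire := fun r => Phi (evens r) (odds r)

/-- `h` is monotone for the prefix order. -/
def MonotoneWord (h : List ℕ → List ℕ) : Prop := ∀ u v, u <+: v → h u <+: h v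

/-- `h` approximates the partial function `F`. -/
def Approximates (h : List ℕ → List ℕ) (F : Baire →. Baire) : Prop :=
  ∀ p, ∀ hp : (F p).Dom,
    (∀ v, IsPrefixOf v p → IsPrefixOf (h v) ((F p).get hp)) ∧
    (∀ m : ℕ, ∃ v, IsPrefixOf v p ∧ m < (h v).length)

/-- `F :⊆ ℕ^ℕ → ℕ^ℕ` is continuous: some monotone word function approximates it. -/
def ContinuousPF (F : Baire →. Baire) : Prop := ∃ h, MonotoneWord h ∧ Approximates h F

/-- `F :⊆ ℕ^ℕ → ℕ^ℕ` is computable: some computable monotone word function approximates it. -/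
def ComputablePF (F : Baire →. Baire) : Prop :=
  ∃ h, Computable h ∧ MonotoneWord h ∧ Approximates h F

/-- A total function is computable iff it is computable as a partial function with full domain. -/
def ComputableTotal (F : Baire → Baire) : Prop := ComputablePF fun p => Part.some (F p)

/-- A problem (multivalued function on Baire space). -/
abbrev Problem : Type := Baire → Set Baire

/-- `F` is a realizer of the problem `f`. -/
def Realizes (F : Baire →. Baire) (f : Problem) : Prop :=
  ∀ p, (f p).Nonempty → ∃ h : (F p).Dom, (F p).get h ∈ f p

/-- `f` is continuous: it has a continuous realizer. -/
def ContinuousProblem (f : Problem) : Prop := ∃ F, ContinuousPF F ∧ Realizes F f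

/-- The discontinuity problem `DIS`. -/
noncomputable def DIS : Problem := fun p => {q | q ∉ U p}

/-- `D` is a discontinuity function for `f`. -/
def DiscontinuityFunction (D : Baire → Baire) (f : Problem) : Prop :=
  ∀ q, (f (D q)).Nonempty ∧ ∀ y ∈ Phi q (D q), y ∉ f (D q)

/-- `f` is computably discontinuous. -/
def ComputablyDiscontinuous (f : Problem) : Prop :=
  ∃ D, ComputableTotal D ∧ DiscontinuityFunction D f

/-- `f` is effectively discontinuous. -/
def EffectivelyDiscontinuous (f : Problem) : Prop :=
  ∃ D : Baire → Baire, Continuous D ∧ DiscontinuityFunction D f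

/-- Weihrauch reducibility `f ≤_W g`. -/
def WeihrauchRed (f g : Problem) : Prop :=
  ∃ H K : Baire →. Baire, ComputablePF H ∧ ComputablePF K ∧
    ∀ G : Baire →. Baire, Realizes G g →
      Realizes (fun p => (K p).bind fun s => (G s).bind fun t => H (bpair p t)) f

/-- Strong Weihrauch reducibility `f ≤_sW g`. -/
def StrongWeihrauchRed (f g : Problem) : Prop :=
  ∃ H K : Baire →. Baire, ComputablePF H ∧ ComputablePF K ∧
    ∀ G : Baire →. Baire, Realizes G g →
      Realizes (fun p => (K p).bind fun s => (G s).bind fun t => H t) f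

/-- Continuous Weihrauch reducibility `f ≤*_W g`. -/
def ContWeihrauchRed (f g : Problem) : Prop :=
  ∃ H K : Baire →. Baire, ContinuousPF H ∧ ContinuousPF K ∧
    ∀ G : Baire →. Baire, Realizes G g →
      Realizes (fun p => (K p).bind fun s => (G s).bind fun t => H (bpair p t)) f

/-- Continuous strong Weihrauch reducibility `f ≤*_sW g`. -/
def ContStrongWeihrauchRed (f g : Problem) : Prop :=
  ∃ H K : Baire →. Baire, ContinuousPF H ∧ ContinuousPF K ∧
    ∀ G : Baire →. Baire, Realizes G g →
      Realizes (fun p => (K p).bind fun s => (G s).bind fun t => H t) f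

/-- Concatenation of the first `n` moves. -/
def concatN (ms : ℕ → List ℕ) (n : ℕ) : List ℕ := ((List.range n).map ms).flatten

/-- The concatenated play is infinite. -/
def PlayInf (ms : ℕ → List ℕ) : Prop := ∀ m : ℕ, ∃ n, m < (concatN ms n).length

/-- The infinite sequence determined by an infinite play. -/
noncomputable def playLim (ms : ℕ → List ℕ) : Baire :=
  Classical.epsilon fun p : Baire => ∀ n, IsPrefixOf (concatN ms n) p

/-- Player II wins the run of the Wadge game of `f` given by the moves `xs` of I and `ys` of II. -/
def WadgeIIWins (f : Problem) (xs ys : ℕ → List ℕ) : Prop :=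
  (PlayInf xs ∧ (f (playLim xs)).Nonempty) → (PlayInf ys ∧ playLim ys ∈ f (playLim xs))

/-- The list of first `n` moves. -/
def histW (xs : ℕ → List ℕ) (n : ℕ) : List (List ℕ) := (List.range n).map xs

/-- `σ` is a winning strategy for Player II in the Wadge game of `f`. -/
def WadgeWinningII (f : Problem) (σ : List (List ℕ) → List ℕ) : Prop :=
  ∀ xs : ℕ → List ℕ, WadgeIIWins f xs fun i => σ (histW xs (i + 1))

/-- `σ` is a winning strategy for Player I in the Wadge game of `f`. -/
def WadgeWinningI (f : Problem) (σ : List (List ℕ) → List ℕ) : Prop :=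
  ∀ ys : ℕ → List ℕ, ¬ WadgeIIWins f (fun i => σ (histW ys i)) ys

/-- The list of first `n` values of a sequence. -/
def histN (x : Baire) (n : ℕ) : List ℕ := (List.range n).map x

/-- Player II wins the run `(x,y)` of the Lipschitz game of `f`. -/
def LipIIWins (f : Problem) (x y : Baire) : Prop := (f x).Nonempty → y ∈ f x

/-- `σ` is a winning strategy for Player II in the Lipschitz game of `f`. -/
def LipWinningII (f : Problem) (σ : List ℕ → ℕ) : Prop :=
  ∀ x : Baire, LipIIWins f x fun i => σ (histN x (i + 1))

/-- `σ` is a winning strategy for Player I in the Lipschitz game of `f`. -/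
def LipWinningI (f : Problem) (σ : List ℕ → ℕ) : Prop :=
  ∀ y : Baire, ¬ LipIIWins f (fun i => σ (histN y i)) y

/-- `σ` is a winning strategy for Player II in the Gale–Stewart game `A`. -/
def GSWinningII (A : Set Baire) (σ : List ℕ → ℕ) : Prop :=
  ∀ x : Baire, bpair x (fun i => σ (histN x (i + 1))) ∈ A

/-- `σ` is a winning strategy for Player I in the Gale–Stewart game `A`. -/
def GSWinningI (A : Set Baire) (σ : List ℕ → ℕ) : Prop :=
  ∀ y : Baire, bpair (fun i => σ (histN y i)) y ∉ A

/-- The totalization `Tf` of `f`. -/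
def Totalization (f : Problem) : Problem := fun p => {q | (f p).Nonempty → q ∈ f p}

/-- The paired graph `⟨graph(Tf)⟩ ⊆ ℕ^ℕ`. -/
def pairedGraph (f : Problem) : Set Baire :=
  {r | ∃ x y : Baire, r = bpair x y ∧ y ∈ Totalization f x}

/-- Domain of the word concatenation map `w*`. -/
def wstarDom (p : Baire) : Prop := PlayInf fun i => word (p i)

/-- The word concatenation map `w* : p ↦ w(p 0) w(p 1) ⋯` (on its domain). -/
noncomputable def wstar (p : Baire) : Baire := playLim fun i => word (p i)

/-- The problem `f^w = w*⁻¹ ∘ f ∘ w*`. -/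
noncomputable def wordLift (f : Problem) : Problem := fun p =>
  {q | wstarDom p ∧ (f (wstar p)).Nonempty ∧ wstarDom q ∧ wstar q ∈ f (wstar p)}

/-- The `i`-th component of a tupled sequence. -/
def tupleComp (p : Baire) (i : ℕ) : Baire := fun n => p (cpair i n)

/-- The parallelization `⟨f⟩` of `f`. -/
def Parallelization (f : Problem) : Problem := fun p =>
  {q | ∀ i, tupleComp q i ∈ f (tupleComp p i)}

/-- Turing reducibility: `p` is computable relative to the oracle `q`. -/
def TuringLe (p q : Baire) : Prop := ∃ F : Baire →. Baire, ComputablePF F ∧ p ∈ F q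

end

lemma word_encode (l : List ℕ) : word (Encodable.encode l) = l :=
  Denumerable.ofNat_encode l

lemma concatN_succ (ms : ℕ → List ℕ) (n : ℕ) :
    concatN ms (n + 1) = concatN ms n ++ ms n := by
  simp [concatN, List.range_succ]

lemma concatN_prefix (ms : ℕ → List ℕ) {a b : ℕ} (h : a ≤ b) :
    concatN ms a <+: concatN ms b := by
  induction b with
  | zero => simp_all
  | succ b ih =>
    rcases Nat.lt_or_ge a (b+1) with h' | h'
    · exact (ih (Nat.lt_succ_iff.mp h')).trans (by rw [concatN_succ]; exact List.prefix_append _ _)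
    · have : a = b + 1 := le_antisymm h h'
      subst this; exact List.prefix_refl _

lemma playLim_spec (ms : ℕ → List ℕ) (n : ℕ) :
    IsPrefixOf (concatN ms n) (playLim ms) := by
  classical
  have hex : ∃ p : Baire, ∀ n, IsPrefixOf (concatN ms n) p := by
    refine ⟨fun m => if h : ∃ k, m < (concatN ms k).length then
      (concatN ms (Nat.find h))[m]'(Nat.find_spec h) else 0, fun n => ?_⟩
    apply List.ext_getElem (by simp)
    intro i h1 h2
    simp only [List.getElem_map, List.getElem_range]
    have hx : ∃ k, i < (concatN ms k).length := ⟨n, h1⟩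
    rw [dif_pos hx]
    rcases le_total (Nat.find hx) n with hle | hle
    · exact ((concatN_prefix ms hle).getElem _).symm
    · exact (concatN_prefix ms hle).getElem _
  exact Classical.epsilon_spec hex n

lemma playLim_unique (ms : ℕ → List ℕ) (h : PlayInf ms) {p : Baire}
    (hp : ∀ n, IsPrefixOf (concatN ms n) p) : playLim ms = p := by
  funext m
  obtain ⟨n, hn⟩ := h m
  have e1 := List.getElem_of_eq (playLim_spec ms n) hn
  have e2 := List.getElem_of_eq (hp n) hn
  simp only [List.getElem_map, List.getElem_range] at e1 e2
  exact e1.symm.trans e2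

lemma wordLift_nonempty {f : Problem} {x : Baire} (hd : wstarDom x)
    (hne : (f (wstar x)).Nonempty) : (wordLift f x).Nonempty := by
  obtain ⟨y, hy⟩ := hne
  set q : Baire := fun i => Encodable.encode [y i] with hq
  have hwq : (fun i => word (q i)) = fun i => [y i] := by
    funext i; exact word_encode [y i]
  have hcc : ∀ n, concatN (fun i => [y i]) n = (List.range n).map y := by
    intro n
    induction n with
    | zero => simp [concatN]
    | succ n ih => rw [concatN_succ, ih, List.range_succ]; simp
  have hpre : ∀ n, IsPrefixOf (concatN (fun i => [y i]) n) y := by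
    intro n; rw [IsPrefixOf, hcc]; simp
  have hdq : wstarDom q := by
    unfold wstarDom; rw [hwq]
    intro m; exact ⟨m + 1, by simp [hcc]⟩
  have hwsq : wstar q = y := by
    unfold wstar; rw [hwq]
    exact playLim_unique _ (fun m => ⟨m + 1, by simp [hcc]⟩) hpre
  exact ⟨q, hd, ⟨y, hy⟩, hdq, by rw [hwsq]; exact hy⟩

lemma histN_map_word (x : Baire) (n : ℕ) :
    (histN x n).map word = histW (fun i => word (x i)) n := by
  simp [histN, histW, List.map_map]

lemma histW_map_encode (xs : ℕ → List ℕ) (n : ℕ) :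
    (histW xs n).map Encodable.encode = histN (fun i => Encodable.encode (xs i)) n := by
  simp [histN, histW, List.map_map]

lemma mem_wordLift {f : Problem} {p q : Baire} :
    q ∈ wordLift f p ↔
      wstarDom p ∧ (f (wstar p)).Nonempty ∧ wstarDom q ∧ wstar q ∈ f (wstar p) :=
  Iff.rfl

/-- For each player, having a winning strategy in the Wadge game of `f` is equivalent to
having a winning strategy in the Lipschitz game of `f^w`. -/
theorem wadge_iff_lipschitz_wordLift (f : Problem) :
    ((∃ σ : List (List ℕ) → List ℕ, WadgeWinningI f σ) ↔
      ∃ τ : List ℕ → ℕ, LipWinningI (wordLift f) τ) ∧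
    ((∃ σ : List (List ℕ) → List ℕ, WadgeWinningII f σ) ↔
      ∃ τ : List ℕ → ℕ, LipWinningII (wordLift f) τ) := by
  constructor
  · -- Player I
    constructor
    · rintro ⟨σ, hσ⟩
      refine ⟨fun l => Encodable.encode (σ (l.map word)), ?_⟩
      intro y hLip
      have hLip' : LipIIWins (wordLift f)
          (fun i => Encodable.encode (σ ((histN y i).map word))) y := hLip
      apply hσ (fun i => word (y i))
      rintro ⟨hinf, hne⟩
      have hxw : (fun i => word (Encodable.encode (σ ((histN y i).map word))))
          = fun i => σ (histW (fun j => word (y j)) i) := by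
        funext i; rw [word_encode, histN_map_word]
      have hdx : wstarDom (fun i => Encodable.encode (σ ((histN y i).map word))) := by
        unfold wstarDom; rw [hxw]; exact hinf
      have hwx : wstar (fun i => Encodable.encode (σ ((histN y i).map word)))
          = playLim (fun i => σ (histW (fun j => word (y j)) i)) := by
        unfold wstar; rw [hxw]
      have hmem := hLip' (wordLift_nonempty hdx (hwx ▸ hne))
      rw [mem_wordLift] at hmem
      obtain ⟨-, -, h3, h4⟩ := hmem
      rw [hwx] at h4
      exact ⟨h3, h4⟩
    · rintro ⟨τ, hτ⟩
      refine ⟨fun l => word (τ (l.map Encodable.encode)), ?_⟩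
      intro ys hW
      apply hτ (fun i => Encodable.encode (ys i))
      intro hne
      have hxw : (fun i => word (τ (histN (fun j => Encodable.encode (ys j)) i)))
          = fun i => word (τ ((histW ys i).map Encodable.encode)) := by
        funext i; rw [histW_map_encode]
      obtain ⟨q0, hq⟩ := hne
      rw [mem_wordLift] at hq
      obtain ⟨h1, h2, -, -⟩ := hq
      have hdx : PlayInf (fun i => word (τ ((histW ys i).map Encodable.encode))) := by
        rw [← hxw]; exact h1
      have hwx : wstar (fun i => τ (histN (fun j => Encodable.encode (ys j)) i))
          = playLim (fun i => word (τ ((histW ys i).map Encodable.encode))) := by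
        unfold wstar; rw [hxw]
      have key := hW ⟨hdx, by rw [← hwx]; exact h2⟩
      rw [mem_wordLift]
      refine ⟨h1, h2, ?_, ?_⟩
      · show PlayInf (fun i => word (Encodable.encode (ys i)))
        have : (fun i => word (Encodable.encode (ys i))) = ys := by
          funext i; exact word_encode (ys i)
        rw [this]; exact key.1
      · show playLim (fun i => word (Encodable.encode (ys i))) ∈ _
        have : (fun i => word (Encodable.encode (ys i))) = ys := by
          funext i; exact word_encode (ys i)
        rw [this, hwx]; exact key.2
  · -- Player II
    constructor
    · rintro ⟨σ, hσ⟩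
      refine ⟨fun l => Encodable.encode (σ (l.map word)), ?_⟩
      intro x hne
      show (fun i => Encodable.encode (σ ((histN x (i + 1)).map word))) ∈ wordLift f x
      obtain ⟨q0, hq⟩ := hne
      rw [mem_wordLift] at hq
      obtain ⟨h1, h2, -, -⟩ := hq
      have key := hσ (fun i => word (x i)) ⟨h1, h2⟩
      have hyw : (fun i => word (Encodable.encode (σ ((histN x (i + 1)).map word))))
          = fun i => σ (histW (fun j => word (x j)) (i + 1)) := by
        funext i; rw [word_encode, histN_map_word]
      rw [mem_wordLift]
      refine ⟨h1, h2, ?_, ?_⟩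
      · show PlayInf (fun i => word (Encodable.encode (σ ((histN x (i + 1)).map word))))
        rw [hyw]; exact key.1
      · show playLim (fun i => word (Encodable.encode (σ ((histN x (i + 1)).map word)))) ∈ _
        rw [hyw]; exact key.2
    · rintro ⟨τ, hτ⟩
      refine ⟨fun l => word (τ (l.map Encodable.encode)), ?_⟩
      intro xs
      rintro ⟨hinf, hne⟩
      have hxw : (fun i => word (Encodable.encode (xs i))) = xs := by
        funext i; exact word_encode (xs i)
      have hdx : wstarDom (fun i => Encodable.encode (xs i)) := by
        unfold wstarDom; rw [hxw]; exact hinf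
      have hwx : wstar (fun i => Encodable.encode (xs i)) = playLim xs := by
        unfold wstar; rw [hxw]
      have hmem := hτ (fun i => Encodable.encode (xs i))
        (wordLift_nonempty hdx (by rw [hwx]; exact hne))
      rw [mem_wordLift] at hmem
      obtain ⟨-, -, h3, h4⟩ := hmem
      rw [hwx] at h4
      have hys : (fun i => word (τ ((histW xs (i + 1)).map Encodable.encode)))
          = fun i => word (τ (histN (fun j => Encodable.encode (xs j)) (i + 1))) := by
        funext i; rw [histW_map_encode]
      constructor
      · show PlayInf (fun i => word (τ ((histW xs (i + 1)).map Encodable.encode)))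
        rw [hys]; exact h3
      · show playLim (fun i => word (τ ((histW xs (i + 1)).map Encodable.encode))) ∈ _
        rw [hys]; exact h4
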